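/- Assume mu_l ≤ mu_h. Then eta_1 and eta_2 are real with eta_2 < 0 < eta_1 < 1, for every real y one has f(y) = −(1−p)(1−q)·mu_l^2·(1−eta_1·y)(1−eta_2·y), and f(1) = mu_l·mu_h·(rho − 1) < 0. -/

import Mathlib

set_option maxHeartbeats 1000000 in
/-- properties of the roots `eta_1, eta_2` of `f`. -/
theorem eta_properties
    (p q mh ml : ℝ)
    (hp : p ∈ Set.Ioo (0:ℝ) 1) (hq : q ∈ Set.Ioo (0:ℝ) 1)
    (hmh : mh ∈ Set.Ioo (0:ℝ) 1) (hml : ml ∈ Set.Ioo (0:ℝ) 1)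
    (hpar : p + q + mh + ml = 1)
    (hrho : p / mh + q / ml < 1)
    (hmu : ml ≤ mh)
    (f : ℝ → ℝ)
    (hf : ∀ y, f y = (mh - (1-p)*ml)*(1-ml)*q*y^2
        + ml*(1 - mh*(1-q) - (1-p)*(1-q)*(1-ml) - (1-p)*q*ml)*y
        - (1-p)*(1-q)*ml^2)
    (eta1 eta2 : ℝ)
    (heta1 : eta1 = ((1 - mh*(1-q) - (1-p)*(1-q)*(1-ml) - (1-p)*q*ml)
        + Real.sqrt ((1 - mh*(1-q) - (1-p)*(1-q)*(1-ml) - (1-p)*q*ml)^2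
            + 4*(1-p)*(1-q)*(mh - (1-p)*ml)*(1-ml)*q))
        / (2*(1-p)*(1-q)*ml))
    (heta2 : eta2 = ((1 - mh*(1-q) - (1-p)*(1-q)*(1-ml) - (1-p)*q*ml)
        - Real.sqrt ((1 - mh*(1-q) - (1-p)*(1-q)*(1-ml) - (1-p)*q*ml)^2
            + 4*(1-p)*(1-q)*(mh - (1-p)*ml)*(1-ml)*q))
        / (2*(1-p)*(1-q)*ml)) :
    eta2 < 0 ∧ 0 < eta1 ∧ eta1 < 1 ∧
    (∀ y : ℝ, f y = -((1-p)*(1-q)*ml^2) * (1 - eta1*y) * (1 - eta2*y)) ∧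
    f 1 = ml*mh*((p / mh + q / ml) - 1) ∧ f 1 < 0 := by
  obtain ⟨hp0, hp1⟩ := hp
  obtain ⟨hq0, hq1⟩ := hq
  obtain ⟨hmh0, hmh1⟩ := hmh
  obtain ⟨hml0, hml1⟩ := hml
  obtain ⟨B, hB⟩ : ∃ B : ℝ, B = 1 - mh*(1-q) - (1-p)*(1-q)*(1-ml) - (1-p)*q*ml := ⟨_, rfl⟩
  rw [← hB] at heta1 heta2 hf
  obtain ⟨s, hs⟩ : ∃ s : ℝ, s = Real.sqrt (B^2 + 4*(1-p)*(1-q)*(mh - (1-p)*ml)*(1-ml)*q) :=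
    ⟨_, rfl⟩
  rw [← hs] at heta1 heta2
  have h1p : (0:ℝ) < 1 - p := by linarith
  have h1q : (0:ℝ) < 1 - q := by linarith
  have hApos : 0 < (mh - (1-p)*ml)*(1-ml)*q := by
    apply mul_pos (mul_pos _ _) hq0 <;> nlinarith
  have hpq : 0 < (1-p)*(1-q)*((mh - (1-p)*ml)*(1-ml)*q) :=
    mul_pos (mul_pos h1p h1q) hApos
  have hDpos : 0 < B^2 + 4*(1-p)*(1-q)*(mh - (1-p)*ml)*(1-ml)*q := by
    nlinarith [sq_nonneg B]
  have hs0 : 0 ≤ s := hs ▸ Real.sqrt_nonneg _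
  have hs2 : s^2 = B^2 + 4*(1-p)*(1-q)*(mh - (1-p)*ml)*(1-ml)*q := by
    rw [hs]; exact Real.sq_sqrt hDpos.le
  have hB2 : B^2 < s^2 := by nlinarith
  have habs : |B| < s := by
    have h := Real.sqrt_lt_sqrt (sq_nonneg B) hB2
    rwa [Real.sqrt_sq_eq_abs, Real.sqrt_sq hs0] at h
  have hsB1 : B < s := (abs_lt.mp habs).2
  have hsB2 : -s < B := (abs_lt.mp habs).1
  have ht : (0:ℝ) < 2*(1-p)*(1-q)*ml :=
    mul_pos (mul_pos (by linarith) h1q) hml0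
  have heta2neg : eta2 < 0 := by
    rw [heta2]; exact div_neg_of_neg_of_pos (by linarith) ht
  have heta1pos : 0 < eta1 := by
    rw [heta1]; exact div_pos (by linarith) ht
  have h1 : (1:ℝ) - p ≠ 0 := by linarith
  have h2 : (1:ℝ) - q ≠ 0 := by linarith
  have h3 : ml ≠ 0 := by linarith
  have htne : (2*(1-p)*(1-q)*ml) ≠ 0 := ht.ne'
  have hsumC : ((1-p)*(1-q)*ml^2) * (eta1 + eta2) = ml*B := by
    rw [heta1, heta2, ← add_div, ← mul_div_assoc, div_eq_iff htne]
    ring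
  have hprodC : ((1-p)*(1-q)*ml^2) * (eta1 * eta2) = -((mh - (1-p)*ml)*(1-ml)*q) := by
    rw [heta1, heta2, div_mul_div_comm, ← mul_div_assoc, div_eq_iff (mul_ne_zero htne htne)]
    linear_combination (-((1-p)*(1-q)*ml^2)) * hs2
  have hfact : ∀ y : ℝ, f y = -((1-p)*(1-q)*ml^2) * (1 - eta1*y) * (1 - eta2*y) := by
    intro y
    rw [hf y]
    linear_combination (-y) * hsumC + (y^2) * hprodC
  have hf1 : f 1 = ml*mh*((p / mh + q / ml) - 1) := by
    rw [hf 1, hB]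
    have h4 : mh ≠ 0 := by linarith
    field_simp
    ring_nf
  have hf1neg : f 1 < 0 := by
    rw [hf1]
    have h : (p / mh + q / ml) - 1 < 0 := by linarith
    exact mul_neg_of_pos_of_neg (by positivity) h
  have heta1lt : eta1 < 1 := by
    have h := hfact 1
    rw [h] at hf1neg
    have hC : 0 < (1-p)*(1-q)*ml^2 := by positivity
    nlinarith [mul_pos hC (by linarith : (0:ℝ) < 1 - eta2)]
  exact ⟨heta2neg, heta1pos, heta1lt, hfact, hf1, hf1neg⟩
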